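/- (Lemma 2, explicit link.) Let a = (ω₊/ω₋)·exp(γ·(δ₊ − δ₋)), b = exp(γ·δ₋), c = exp(γ·δ₊). For p ∈ (0,1) set q = (1 − p)/p. Then the unique f ∈ ℝ satisfying Ψ⁻¹(f) = p is f = (1/γ)·log( ( (a·b/q − c) + √( (a·b/q − c)² + 4·a/q ) ) / 2 ); equivalently, this f is the unique minimizer of the conditional risk C_p. -/

import Mathlib

/-- Strict monotonicity of the logistic sigmoid. -/
lemma sig_strictMono_aux {u v : ℝ} (h : u < v) :
    Real.exp u / (1 + Real.exp u) < Real.exp v / (1 + Real.exp v) := by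
  have hu := Real.exp_pos u
  have hv := Real.exp_pos v
  rw [div_lt_div_iff₀ (by linarith) (by linarith)]
  nlinarith [Real.exp_lt_exp.mpr h]

/-- Algebraic step: vanishing derivative from the link equation. -/
lemma deriv_zero_aux {ωp ωm p u v : ℝ} (hωm : 0 < ωm) (hp0 : 0 < p)
    (hu : 0 < u) (hv : 0 < v)
    (h : ωp / ωm * (u / (1 + u)) * ((1 + v) / v) = (1 - p) / p) :
    -(p * ωp) * (u / (1 + u)) + (1 - p) * ωm * (v / (1 + v)) = 0 := by
  have h1 : (0:ℝ) < 1 + u := by linarith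
  have h2 : (0:ℝ) < 1 + v := by linarith
  field_simp at h
  have key : (p * ωp * u) / (1 + u) = ((1 - p) * ωm * v) / (1 + v) :=
    (div_eq_div_iff (ne_of_gt h1) (ne_of_gt h2)).2 (by linear_combination h)
  have final : -(p * ωp) * (u / (1 + u)) + (1 - p) * ωm * (v / (1 + v))
      = -((p * ωp * u) / (1 + u)) + ((1 - p) * ωm * v) / (1 + v) := by ring
  rw [final, key]; ring

set_option maxHeartbeats 1600000 in
/-- Lemma 2 (explicit link): the unique `f` with `Ψ⁻¹(f) = p` is given by the explicit
formula, and it is the unique minimiser of the conditional risk `C p`. -/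
theorem binary_pairwise_margin_explicit_link
    (ωp ωm γ : ℝ) (hωp : 0 < ωp) (hωm : 0 < ωm) (hγ : 0 < γ)
    (δp δm : ℝ)
    (a b c : ℝ)
    (ha : a = (ωp / ωm) * Real.exp (γ * (δp - δm)))
    (hb : b = Real.exp (γ * δm)) (hc : c = Real.exp (γ * δp))
    (r Ψinv : ℝ → ℝ)
    (hr : ∀ f : ℝ, r f = (ωp / ωm) *
      (Real.exp (γ * δp - γ * f) / (1 + Real.exp (γ * δp - γ * f))) *
      ((1 + Real.exp (γ * δm + γ * f)) / Real.exp (γ * δm + γ * f)))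
    (hΨ : ∀ f : ℝ, Ψinv f = 1 / (1 + r f))
    (C : ℝ → ℝ → ℝ)
    (hC : ∀ η f : ℝ, C η f =
      η * ((ωp / γ) * Real.log (1 + Real.exp (γ * δp - γ * f))) +
      (1 - η) * ((ωm / γ) * Real.log (1 + Real.exp (γ * δm + γ * f))))
    (p : ℝ) (hp : p ∈ Set.Ioo (0 : ℝ) 1)
    (q : ℝ) (hqdef : q = (1 - p) / p)
    (f₀ : ℝ)
    (hf₀ : f₀ = (1 / γ) * Real.log
      (((a * b / q - c) + Real.sqrt ((a * b / q - c) ^ 2 + 4 * a / q)) / 2)) :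
    (Ψinv f₀ = p ∧ ∀ f : ℝ, Ψinv f = p → f = f₀) ∧
    ((∀ g : ℝ, C p f₀ ≤ C p g) ∧ ∀ f : ℝ, (∀ g : ℝ, C p f ≤ C p g) → f = f₀) := by
  obtain ⟨hp0, hp1⟩ := hp
  have hγ' : γ ≠ 0 := ne_of_gt hγ
  have hq : 0 < q := by rw [hqdef]; exact div_pos (by linarith) hp0
  have ha0 : 0 < a := by rw [ha]; positivity
  have hb0 : 0 < b := by rw [hb]; exact Real.exp_pos _
  have hc0 : 0 < c := by rw [hc]; exact Real.exp_pos _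
  set t : ℝ := a * b / q - c with ht
  set s : ℝ := Real.sqrt (t ^ 2 + 4 * a / q) with hs
  clear_value t
  have hs0 : 0 ≤ s := Real.sqrt_nonneg _
  have hs2 : s ^ 2 = t ^ 2 + 4 * a / q := Real.sq_sqrt (by positivity)
  have hts : |t| < s := by
    rw [hs, ← Real.sqrt_sq_eq_abs]
    apply Real.sqrt_lt_sqrt (sq_nonneg t)
    have h4 : 0 < 4 * a / q := by positivity
    linarith
  have htls : t < s := lt_of_le_of_lt (le_abs_self t) hts
  have hnts : -t < s := lt_of_le_of_lt (neg_le_abs t) hts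
  set x₀ : ℝ := (t + s) / 2 with hx0def
  have hs2 : s ^ 2 = t ^ 2 + 4 * a / q := hs2
  clear_value s x₀
  have hx0 : 0 < x₀ := by rw [hx0def]; linarith
  have hx2 : x₀ ^ 2 = t * x₀ + a / q := by
    rw [hx0def]; linear_combination hs2 / 4
  have hexpf0 : Real.exp (γ * f₀) = x₀ := by
    have h1 : γ * f₀ = Real.log x₀ := by rw [hf₀]; field_simp
    rw [h1, Real.exp_log hx0]
  -- r in terms of x = exp (γ f)
  have hrx : ∀ f : ℝ, r f =
      a * (1 + b * Real.exp (γ * f)) / (Real.exp (γ * f) * (Real.exp (γ * f) + c)) := by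
    intro f
    have e1 : Real.exp (γ * δp - γ * f) = c / Real.exp (γ * f) := by
      rw [hc, ← Real.exp_sub]
    have e2 : Real.exp (γ * δm + γ * f) = b * Real.exp (γ * f) := by
      rw [hb, ← Real.exp_add]
    have e3 : Real.exp (γ * (δp - δm)) = c / b := by
      rw [hc, hb, ← Real.exp_sub]; ring_nf
    have hx : 0 < Real.exp (γ * f) := Real.exp_pos _
    rw [hr, e1, e2, ha, e3]
    have h1 : (0:ℝ) < 1 + c / Real.exp (γ * f) := by positivity
    field_simp
  have hrpos : ∀ f : ℝ, 0 < r f := by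
    intro f; rw [hrx f]
    have hx : 0 < Real.exp (γ * f) := Real.exp_pos _
    positivity
  have hΨ_iff : ∀ f : ℝ, Ψinv f = p ↔ r f = q := by
    intro f
    rw [hΨ, hqdef]
    have h1 : (0:ℝ) < 1 + r f := by linarith [hrpos f]
    constructor
    · intro h
      rw [div_eq_iff (ne_of_gt h1)] at h
      field_simp
      nlinarith [h]
    · intro h
      rw [h, show (1:ℝ) + (1 - p) / p = 1 / p by field_simp; ring, one_div_one_div]
  have hq_iff : ∀ f : ℝ, r f = q ↔
      (Real.exp (γ * f)) ^ 2 = t * Real.exp (γ * f) + a / q := by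
    intro f
    have hx : 0 < Real.exp (γ * f) := Real.exp_pos _
    rw [hrx f, div_eq_iff (by positivity)]
    rw [ht]
    constructor
    · intro h
      field_simp
      linear_combination -h
    · intro h
      field_simp at h
      linear_combination -h
  -- Part 1
  have hrf0 : r f₀ = q := by
    rw [hq_iff f₀, hexpf0]; exact hx2
  have part1 : Ψinv f₀ = p ∧ ∀ f : ℝ, Ψinv f = p → f = f₀ := by
    constructor
    · exact (hΨ_iff f₀).2 hrf0
    · intro f hf
      have hx : 0 < Real.exp (γ * f) := Real.exp_pos _
      have hq2 := (hq_iff f).1 ((hΨ_iff f).1 hf)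
      have hfac : (Real.exp (γ * f) - x₀) * (Real.exp (γ * f) + x₀ - t) = 0 := by
        linear_combination hq2 - hx2
      have hpos2 : 0 < Real.exp (γ * f) + x₀ - t := by
        have : x₀ - t = (s - t) / 2 := by rw [hx0def]; ring
        linarith
      have hxx0 : Real.exp (γ * f) = x₀ := by
        rcases mul_eq_zero.1 hfac with h | h
        · linarith
        · linarith
      have : γ * f = γ * f₀ := Real.exp_injective (by rw [hxx0, hexpf0])
      exact mul_left_cancel₀ hγ' this
  refine ⟨part1, ?_⟩
  -- Part 2 : minimisation
  set D : ℝ → ℝ := fun f =>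
    -(p * ωp) * (Real.exp (γ * δp - γ * f) / (1 + Real.exp (γ * δp - γ * f)))
    + ((1 - p) * ωm) * (Real.exp (γ * δm + γ * f) / (1 + Real.exp (γ * δm + γ * f))) with hD
  clear_value D
  have hCp : C p = fun f => (p * (ωp / γ)) * Real.log (1 + Real.exp (γ * δp - γ * f))
      + ((1 - p) * (ωm / γ)) * Real.log (1 + Real.exp (γ * δm + γ * f)) := by
    funext f; rw [hC]; ring
  have hDeriv : ∀ f : ℝ, HasDerivAt (C p) (D f) f := by
    intro f
    have h1 : HasDerivAt (fun x : ℝ => γ * δp - γ * x) (-γ) f := by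
      simpa using ((hasDerivAt_id f).const_mul γ).const_sub (γ * δp)
    have h2 : HasDerivAt (fun x : ℝ => γ * δm + γ * x) γ f := by
      simpa using ((hasDerivAt_id f).const_mul γ).const_add (γ * δm)
    have h3 := (h1.exp.const_add 1).log (by positivity : (1:ℝ) + Real.exp (γ * δp - γ * f) ≠ 0)
    have h4 := (h2.exp.const_add 1).log (by positivity : (1:ℝ) + Real.exp (γ * δm + γ * f) ≠ 0)
    have h5 := (h3.const_mul (p * (ωp / γ))).add (h4.const_mul ((1 - p) * (ωm / γ)))
    rw [hCp]
    refine h5.congr_deriv ?_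
    simp only [hD]
    have e1 : (0:ℝ) < 1 + Real.exp (γ * δp - γ * f) := by positivity
    have e2 : (0:ℝ) < 1 + Real.exp (γ * δm + γ * f) := by positivity
    field_simp
  have hD0 : D f₀ = 0 := by
    have h := hrf0
    rw [hr, hqdef] at h
    simp only [hD]
    exact deriv_zero_aux hωm hp0 (Real.exp_pos _) (Real.exp_pos _) h
  have hDmono : StrictMono D := by
    intro f1 f2 h
    have hle : γ * f1 < γ * f2 := by
      exact mul_lt_mul_of_pos_left h hγ
    have s1 : Real.exp (γ * δp - γ * f2) / (1 + Real.exp (γ * δp - γ * f2))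
        < Real.exp (γ * δp - γ * f1) / (1 + Real.exp (γ * δp - γ * f1)) := by
      apply sig_strictMono_aux; linarith
    have s2 : Real.exp (γ * δm + γ * f1) / (1 + Real.exp (γ * δm + γ * f1))
        < Real.exp (γ * δm + γ * f2) / (1 + Real.exp (γ * δm + γ * f2)) := by
      apply sig_strictMono_aux; linarith
    simp only [hD]
    have m1 := mul_lt_mul_of_pos_left s1 (mul_pos hp0 hωp)
    have m2 := mul_lt_mul_of_pos_left s2 (mul_pos (by linarith : (0:ℝ) < 1 - p) hωm)
    linarith [m1, m2]
  have hDpos : ∀ x : ℝ, f₀ < x → 0 < D x := by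
    intro x hx; have := hDmono hx; linarith [hD0]
  have hDneg : ∀ x : ℝ, x < f₀ → D x < 0 := by
    intro x hx; have := hDmono hx; linarith [hD0]
  have hcont : ∀ x : ℝ, ContinuousAt (C p) x :=
    fun x => (hDeriv x).differentiableAt.continuousAt
  have hmono : StrictMonoOn (C p) (Set.Ici f₀) := by
    apply strictMonoOn_of_deriv_pos (convex_Ici _)
      (fun x _ => (hcont x).continuousWithinAt)
    intro x hx
    rw [interior_Ici] at hx
    rw [(hDeriv x).deriv]
    exact hDpos x hx
  have hanti : StrictAntiOn (C p) (Set.Iic f₀) := by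
    apply strictAntiOn_of_deriv_neg (convex_Iic _)
      (fun x _ => (hcont x).continuousWithinAt)
    intro x hx
    rw [interior_Iic] at hx
    rw [(hDeriv x).deriv]
    exact hDneg x hx
  have hmin : ∀ g : ℝ, C p f₀ ≤ C p g := by
    intro g
    rcases lt_trichotomy g f₀ with h | h | h
    · exact le_of_lt (hanti (Set.mem_Iic.2 (le_of_lt h)) (Set.mem_Iic.2 le_rfl) h)
    · rw [h]
    · exact le_of_lt (hmono (Set.mem_Ici.2 le_rfl) (Set.mem_Ici.2 (le_of_lt h)) h)
  refine ⟨hmin, ?_⟩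
  intro f hf
  by_contra hne
  have h2 := hf f₀
  rcases lt_or_gt_of_ne hne with h | h
  · have := hanti (Set.mem_Iic.2 (le_of_lt h)) (Set.mem_Iic.2 le_rfl) h
    linarith
  · have := hmono (Set.mem_Ici.2 le_rfl) (Set.mem_Ici.2 (le_of_lt h)) h
    linarith
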